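/- Let f : ℝ^N → ℝ be convex differentiable with ∇f Lipschitz with constant L_f ≥ 0, g : ℝ^N → ℝ μ-strongly convex with μ > 0, F := f + g, A a real p×N matrix, b ∈ ℝ^p, β > 0, and P a symmetric N×N matrix with P − β AᵀA positive definite and P − β AᵀA ⪯ (μ/2)I. Set k₀ := 2L_f/μ, and for k ≥ 1 set β_k = ρ_k = kβ and P^k = kP + L_f I. Suppose there is a KKT point: x* ∈ ℝ^N, λ* ∈ ℝ^p and a subgradient w of F at x* with w = Aᵀλ* and Ax* = b. Let sequences x^k ∈ ℝ^N, λ^k ∈ ℝ^p with λ¹ = 0, r^k := A x^k − b satisfy, for each k ≥ 1: there is a subgradient v of g at x^{k+1} with ∇f(x^k) − Aᵀ(λ^k − β_k r^k) + v + P^k(x^{k+1} − x^k) = 0, and λ^{k+1} = λ^k − ρ_k r^{k+1}. Then for every t ≥ 1: max{ β‖r^{t+1}‖², ‖x^{t+1} − x*‖²_{P − β AᵀA} } ≤ (2/(t(t+k₀+1))) φ₁(x*, λ*), where φ₁(x, λ) := ((k₀+2)/(2β))‖λ‖² + ((k₀+2)/2)‖x¹ − x‖²_{P + L_f I − β AᵀA}.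 -/

import Mathlib

open Set intervalIntegral

section Helpers
variable {E : Type*} [NormedAddCommGroup E] [InnerProductSpace ℝ E] [CompleteSpace E]
local notation "⟪" x ", " y "⟫" => @inner ℝ _ _ x y

lemma grad_convex_ineq (f : E → ℝ) (hconv : ConvexOn ℝ univ f)
    (x z G : E) (hgrad : HasGradientAt f G x) : ⟪G, z - x⟫ ≤ f z - f x := by
  set φ : ℝ → ℝ := fun s => f (s • (z - x) + x) with hφ
  have hc : ∀ s : ℝ, HasDerivAt (fun s : ℝ => s • (z - x) + x) (z - x) s := by
    intro s
    simpa using ((hasDerivAt_id s).smul_const (z - x)).add_const x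
  have hd : HasDerivAt φ ⟪G, z - x⟫ 0 := by
    have h0 : x = (0:ℝ) • (z - x) + x := by simp
    have hF := (hasGradientAt_iff_hasFDerivAt.1 hgrad)
    rw [h0] at hF
    have := hF.comp_hasDerivAt (0:ℝ) (hc 0)
    simp at this; exact this
  have hφconv : ConvexOn ℝ univ φ := by
    have := hconv.comp_affineMap (AffineMap.lineMap x z : ℝ →ᵃ[ℝ] E)
    simp only [Set.preimage_univ] at this
    have heq : φ = f ∘ (AffineMap.lineMap x z : ℝ →ᵃ[ℝ] E) := by
      funext s
      simp [hφ, AffineMap.lineMap_apply, add_comm]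
    rw [heq]; exact this
  have := hφconv.le_slope_of_hasDerivAt (mem_univ 0) (mem_univ 1) one_pos hd
  rw [slope_def_field] at this
  have h1 : φ 1 = f z := by simp [hφ]
  have h0 : φ 0 = f x := by simp [hφ]
  rw [h1, h0] at this
  simpa using this

lemma descent_lemma (f : E → ℝ) (Gf : E → E) (Lf : ℝ) (hLf : 0 ≤ Lf)
    (hgrad : ∀ z, HasGradientAt f (Gf z) z)
    (hflip : ∀ u v, ‖Gf u - Gf v‖ ≤ Lf * ‖u - v‖) (x y : E) :
    f y ≤ f x + ⟪Gf x, y - x⟫ + Lf / 2 * ‖y - x‖ ^ 2 := by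
  set d := y - x with hd
  set c : ℝ → E := fun s => s • d + x with hcdef
  set φ' : ℝ → ℝ := fun s => ⟪Gf (c s), d⟫ with hφ'
  have hccont : Continuous c := by continuity
  have hGcont : Continuous Gf := by
    rcases eq_or_lt_of_le hLf with h | h
    · have : ∀ u v : E, Gf u = Gf v := by
        intro u v
        have := hflip u v
        rw [← h] at this
        simpa [norm_le_zero_iff, sub_eq_zero] using this
      have : Gf = fun _ => Gf 0 := funext fun u => this u 0
      rw [this]; exact continuous_const
    · have : LipschitzWith ⟨Lf, hLf⟩ Gf := by
        apply LipschitzWith.of_dist_le_mul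
        intro u v
        rw [dist_eq_norm, dist_eq_norm]; exact hflip u v
      exact this.continuous
  have hφ'cont : Continuous φ' := (hGcont.comp hccont).inner continuous_const
  have hderiv : ∀ s ∈ uIcc (0:ℝ) 1, HasDerivAt (fun s => f (c s)) (φ' s) s := by
    intro s _
    have hc : HasDerivAt c d s := by
      convert ((hasDerivAt_id s).smul_const d).add_const x using 1 <;> simp [hcdef]
    have hF := hasGradientAt_iff_hasFDerivAt.1 (hgrad (c s))
    have := hF.comp_hasDerivAt s hc
    simp [φ'] at this; exact this
  have hint : f (c 1) - f (c 0) = ∫ s in (0:ℝ)..1, φ' s :=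
    (integral_eq_sub_of_hasDerivAt hderiv (hφ'cont.intervalIntegrable 0 1)).symm
  have hbound : ∫ s in (0:ℝ)..1, φ' s ≤ ∫ s in (0:ℝ)..1, (⟪Gf x, d⟫ + (Lf * ‖d‖^2) * s) := by
    apply integral_mono_on zero_le_one (hφ'cont.intervalIntegrable 0 1)
      ((continuous_const.add (continuous_const.mul continuous_id)).intervalIntegrable 0 1)
    intro s hs
    have h1 : φ' s - ⟪Gf x, d⟫ = ⟪Gf (c s) - Gf x, d⟫ := by
      rw [inner_sub_left]
    have h2 : ⟪Gf (c s) - Gf x, d⟫ ≤ ‖Gf (c s) - Gf x‖ * ‖d‖ := real_inner_le_norm _ _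
    have h3 : ‖Gf (c s) - Gf x‖ ≤ Lf * (s * ‖d‖) := by
      have := hflip (c s) x
      have hcs : c s - x = s • d := by simp [hcdef]
      rwa [hcs, norm_smul, Real.norm_eq_abs, abs_of_nonneg hs.1] at this
    simp only [Pi.add_apply, Pi.mul_apply, id_eq]
    have h4 := mul_le_mul_of_nonneg_right h3 (norm_nonneg d)
    have h5 : Lf * (s * ‖d‖) * ‖d‖ = Lf * ‖d‖ ^ 2 * s := by ring
    linarith
  have hrhs : (∫ s in (0:ℝ)..1, (⟪Gf x, d⟫ + (Lf * ‖d‖^2) * s))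
      = ⟪Gf x, d⟫ + Lf / 2 * ‖d‖ ^ 2 := by
    rw [integral_add (intervalIntegrable_const)
      ((intervalIntegrable_id.const_mul _))]
    rw [integral_const_mul, integral_id]
    simp
    ring
  have h0 : c 0 = x := by simp [hcdef]
  have h1 : c 1 = y := by simp [hcdef, hd]
  rw [h0, h1] at hint
  linarith [hint, hbound, hrhs.le, hrhs.ge]

lemma strong_subgrad (g : E → ℝ) (μ : ℝ) (hμ : 0 < μ)
    (hg : ConvexOn ℝ univ (fun z => g z - μ / 2 * ‖z‖ ^ 2))
    (x v : E) (hv : ∀ z, g x + ⟪v, z - x⟫ ≤ g z) (z : E) :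
    g x + ⟪v, z - x⟫ + μ / 2 * ‖z - x‖ ^ 2 ≤ g z := by
  set h : E → ℝ := fun z => g z - μ / 2 * ‖z‖ ^ 2 with hh
  have key : ⟪v, z - x⟫ ≤ (h z - h x + μ * ⟪x, z - x⟫) := by
    apply le_of_forall_pos_le_add
    intro ε hε
    set m : ℝ := μ / 2 * ‖z - x‖ ^ 2 with hm
    have hm0 : 0 ≤ m := by positivity
    set s : ℝ := min 1 (ε / (m + 1)) with hs
    have hs0 : 0 < s := lt_min one_pos (by positivity)
    have hs1 : s ≤ 1 := min_le_left _ _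
    have hsm : s * m ≤ ε := by
      calc s * m ≤ (ε / (m + 1)) * m := by
            apply mul_le_mul_of_nonneg_right (min_le_right _ _) hm0
        _ ≤ ε := by
            rw [div_mul_eq_mul_div, div_le_iff₀ (by linarith)]
            nlinarith
    have hconv := hg.2 (mem_univ x) (mem_univ z)
      (show (0:ℝ) ≤ 1 - s by linarith) (le_of_lt hs0) (by ring : (1 - s) + s = 1)
    have hsub := hv ((1 - s) • x + s • z)
    have hpt : (1 - s) • x + s • z - x = s • (z - x) := by module
    rw [hpt, real_inner_smul_right] at hsub
    have hnorm : ‖(1 - s) • x + s • z‖ ^ 2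
        = ‖x‖ ^ 2 + 2 * s * ⟪x, z - x⟫ + s ^ 2 * ‖z - x‖ ^ 2 := by
      have : (1 - s) • x + s • z = x + s • (z - x) := by module
      rw [this]
      rw [norm_add_sq_real, norm_smul, real_inner_smul_right]
      rw [Real.norm_eq_abs, abs_of_nonneg hs0.le]
      ring
    simp only [hh] at hconv
    have := hconv
    rw [hnorm] at this
    have hdiv : s * ⟪v, z - x⟫ ≤ s * (h z - h x + μ * ⟪x, z - x⟫) + s * (s * m) := by
      simp only [hh, hm]
      simp only [inner_sub_right, smul_eq_mul, real_inner_self_eq_norm_sq] at this hsub ⊢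
      nlinarith [this, hsub]
    have := (mul_le_mul_iff_right₀ hs0).1 (by linarith : s * ⟪v, z - x⟫ ≤ s * ((h z - h x + μ * ⟪x, z - x⟫) + s * m))
    linarith [hsm, this]
  simp only [hh] at key
  have hzx2 : μ / 2 * ‖z - x‖ ^ 2 = μ / 2 * ‖z‖ ^ 2 - μ * ⟪x, z⟫ + μ / 2 * ‖x‖ ^ 2 := by
    rw [norm_sub_sq_real, real_inner_comm]; ring
  simp only [inner_sub_right, real_inner_self_eq_norm_sq] at key ⊢
  nlinarith [key, hzx2]

end Helpers

/-- quadratic form `‖v‖²_W = ⟪v, W v⟫` associated to an operator `W`. -/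
noncomputable def qform {E : Type*} [NormedAddCommGroup E] [InnerProductSpace ℝ E]
    (W : E →L[ℝ] E) (v : E) : ℝ := inner ℝ v (W v)

section Helpers2
variable {E : Type*} [NormedAddCommGroup E] [InnerProductSpace ℝ E]
local notation "⟪" x ", " y "⟫" => @inner ℝ _ _ x y

lemma qform_polar (W : E →L[ℝ] E) (hW : ∀ u v : E, ⟪W u, v⟫ = ⟪u, W v⟫) (u v : E) :
    2 * ⟪W u, v⟫ = qform W u + qform W v - qform W (u - v) := by
  simp only [qform, map_sub, inner_sub_left, inner_sub_right]
  have h1 := hW u v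
  have h2 : ⟪v, W u⟫ = ⟪W u, v⟫ := real_inner_comm _ _
  have h3 : ⟪u, W u⟫ = ⟪W u, u⟫ := real_inner_comm _ _
  linarith

lemma qform_nonneg_of_pos (W : E →L[ℝ] E) (h : ∀ v : E, v ≠ 0 → 0 < qform W v) (v : E) :
    0 ≤ qform W v := by
  rcases eq_or_ne v 0 with rfl | hv
  · simp [qform]
  · exact (h v hv).le

end Helpers2

set_option maxHeartbeats 1600000 in
/-- Theorem 2.3 of the paper (rate of order 1/t²), first part. -/
theorem stmt_4
    {p N : ℕ}
    (f g : EuclideanSpace ℝ (Fin N) → ℝ)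
    (Gf : EuclideanSpace ℝ (Fin N) → EuclideanSpace ℝ (Fin N))
    (Lf : ℝ) (hLf : 0 ≤ Lf)
    (hfconv : ConvexOn ℝ Set.univ f)
    (hfgrad : ∀ z, HasGradientAt f (Gf z) z)
    (hflip : ∀ u v, ‖Gf u - Gf v‖ ≤ Lf * ‖u - v‖)
    (μ : ℝ) (hμ : 0 < μ)
    (hg : ConvexOn ℝ Set.univ (fun z => g z - μ / 2 * ‖z‖ ^ 2))
    (A : EuclideanSpace ℝ (Fin N) →L[ℝ] EuclideanSpace ℝ (Fin p))
    (b : EuclideanSpace ℝ (Fin p))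
    (β : ℝ) (hβ : 0 < β)
    (P : EuclideanSpace ℝ (Fin N) →L[ℝ] EuclideanSpace ℝ (Fin N))
    (hPsym : ∀ u v, inner ℝ (P u) v = (inner ℝ u (P v) : ℝ))
    (hPpos : ∀ v, v ≠ 0 →
      0 < qform (P - β • ((ContinuousLinearMap.adjoint A).comp A)) v)
    (hPle : ∀ v,
      qform (P - β • ((ContinuousLinearMap.adjoint A).comp A)) v ≤ μ / 2 * ‖v‖ ^ 2)
    (xstar : EuclideanSpace ℝ (Fin N)) (lamstar : EuclideanSpace ℝ (Fin p))
    (w : EuclideanSpace ℝ (Fin N))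
    (hw : ∀ z, (f xstar + g xstar) + inner ℝ w (z - xstar) ≤ f z + g z)
    (hkkt : w = ContinuousLinearMap.adjoint A lamstar)
    (hfeas : A xstar = b)
    (x : ℕ → EuclideanSpace ℝ (Fin N)) (lamseq : ℕ → EuclideanSpace ℝ (Fin p))
    (hlam1 : lamseq 1 = 0)
    (hiter : ∀ k : ℕ, 1 ≤ k → ∃ v : EuclideanSpace ℝ (Fin N),
      (∀ z, g (x (k + 1)) + inner ℝ v (z - x (k + 1)) ≤ g z) ∧
      Gf (x k) - ContinuousLinearMap.adjoint A
          (lamseq k - ((k : ℝ) * β) • (A (x k) - b))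
        + v + ((k : ℝ) • P + Lf • 1) (x (k + 1) - x k) = 0)
    (hlam : ∀ k : ℕ, 1 ≤ k →
      lamseq (k + 1) = lamseq k - ((k : ℝ) * β) • (A (x (k + 1)) - b))
    (t : ℕ) (ht : 1 ≤ t) :
    max (β * ‖A (x (t + 1)) - b‖ ^ 2)
        (qform (P - β • ((ContinuousLinearMap.adjoint A).comp A)) (x (t + 1) - xstar))
      ≤ 2 / ((t : ℝ) * ((t : ℝ) + 2 * Lf / μ + 1)) *
        ((2 * Lf / μ + 2) / (2 * β) * ‖lamstar‖ ^ 2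
          + (2 * Lf / μ + 2) / 2 *
            qform (P + Lf • 1 - β • ((ContinuousLinearMap.adjoint A).comp A)) (x 1 - xstar)) := by
  set M := (ContinuousLinearMap.adjoint A).comp A with hM
  set Q := P - β • M with hQdef
  set k0 := 2 * Lf / μ with hk0
  have hk00 : 0 ≤ k0 := by positivity
  have hk0mu : k0 * μ = 2 * Lf := by
    rw [hk0]; field_simp
  -- expansion of quadratic forms
  have hQexp : ∀ v, qform Q v = (inner ℝ v (P v) : ℝ) - β * ‖A v‖ ^ 2 := by
    intro v
    simp only [qform, hQdef, ContinuousLinearMap.sub_apply, ContinuousLinearMap.smul_apply,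
      ContinuousLinearMap.comp_apply, inner_sub_right, real_inner_smul_right, hM]
    rw [ContinuousLinearMap.adjoint_inner_right, real_inner_self_eq_norm_sq]
  have hQnonneg : ∀ v, 0 ≤ qform Q v := qform_nonneg_of_pos Q hPpos
  have hQle : ∀ v, qform Q v ≤ μ / 2 * ‖v‖ ^ 2 := hPle
  -- THE KEY ONE-STEP INEQUALITY
  have KEY : ∀ k : ℕ, 1 ≤ k →
      ‖lamseq (k+1) - lamstar‖^2 + (k:ℝ)^2 * β * qform Q (x (k+1) - xstar)
        + (k:ℝ)^2 * β^2 * ‖A (x (k+1)) - b‖^2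
        + (k:ℝ) * β * (Lf + μ) * ‖x (k+1) - xstar‖^2
      ≤ ‖lamseq k - lamstar‖^2 + (k:ℝ)^2 * β * qform Q (x k - xstar)
        + (k:ℝ) * β * Lf * ‖x k - xstar‖^2 := by
    intro k hk
    obtain ⟨v, hvsub, hveq⟩ := hiter k hk
    set kk : ℝ := (k:ℝ) with hkk
    set xk := x k with hxk
    set xp := x (k+1) with hxp
    set e := xk - xstar with he
    set ep := xp - xstar with hep
    set d := xp - xk with hd
    set rk := A xk - b with hrk
    set rp := A xp - b with hrp
    set lk := lamseq k with hlk
    set lp := lamseq (k+1) with hlp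
    clear_value kk xk xp e ep d rk rp lk lp
    have hkk1 : (1:ℝ) ≤ kk := by rw [hkk]; exact_mod_cast hk
    have hkb : 0 < kk * β := by nlinarith [hkk1, hβ]
    have hAep : A ep = rp := by rw [hep, map_sub, hfeas, hrp]
    have hAe : A e = rk := by rw [he, map_sub, hfeas, hrk]
    have hAd : A d = rp - rk := by rw [hd, map_sub, hrp, hrk]; abel
    -- function value inequalities
    have F1 := strong_subgrad g μ hμ hg xp v hvsub xstar
    have hsx : xstar - xp = -ep := by rw [hep]; abel
    rw [hsx, inner_neg_right, norm_neg] at F1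
    have F2 := grad_convex_ineq f hfconv xk xstar (Gf xk) (hfgrad xk)
    have hsx2 : xstar - xk = -e := by rw [he]; abel
    rw [hsx2, inner_neg_right] at F2
    have F3 := descent_lemma f Gf Lf hLf hfgrad hflip xk xp
    rw [← hd] at F3
    have F4 := hw xp
    have hwep : (inner ℝ w (xp - xstar) : ℝ) = inner ℝ lamstar rp := by
      rw [hkkt, ContinuousLinearMap.adjoint_inner_left, ← hep, hAep]
    rw [hwep] at F4
    -- split inner products
    have hsplitG : (inner ℝ (Gf xk) ep : ℝ) = inner ℝ (Gf xk) d + inner ℝ (Gf xk) e := by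
      rw [← inner_add_right]
      congr 1
      rw [hep, hd, he]; abel
    -- S1
    have S1 : (inner ℝ lamstar rp : ℝ) + μ/2 * ‖ep‖^2
        ≤ inner ℝ (Gf xk) ep + inner ℝ v ep + Lf/2 * ‖d‖^2 := by
      rw [hsplitG]
      linarith [F1, F2, F3, F4]
    -- optimality equation, scalar form
    have S2 : (inner ℝ (Gf xk) ep : ℝ) + inner ℝ v ep
        = inner ℝ lk rp - kk * β * inner ℝ rk rp - kk * inner ℝ (P d) ep - Lf * inner ℝ d ep := by
      have h0 := congrArg (fun u => (inner ℝ u ep : ℝ)) hveq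
      simp only [inner_add_left, inner_sub_left, inner_zero_left,
        ContinuousLinearMap.add_apply, ContinuousLinearMap.smul_apply,
        ContinuousLinearMap.one_apply, ContinuousLinearMap.adjoint_inner_left,
        real_inner_smul_left] at h0
      rw [hAep] at h0
      linarith [h0]
    -- S3
    have S3 : (inner ℝ lamstar rp : ℝ) + μ/2 * ‖ep‖^2
        ≤ inner ℝ lk rp - kk * β * inner ℝ rk rp - kk * inner ℝ (P d) ep - Lf * inner ℝ d ep
          + Lf/2 * ‖d‖^2 := by linarith [S1, S2]
    -- equalities
    have E1 : lk = lp + (kk * β) • rp := by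
      have hlam' := hlam k hk
      rw [← hkk, ← hxp, ← hrp, ← hlk, ← hlp] at hlam'
      rw [hlam']; abel
    have E1' : (inner ℝ lk rp : ℝ) = inner ℝ lp rp + kk * β * ‖rp‖^2 := by
      rw [E1, inner_add_left, real_inner_smul_left, real_inner_self_eq_norm_sq]
    have E7 : (inner ℝ (lp - lamstar) rp : ℝ) = inner ℝ lp rp - inner ℝ lamstar rp :=
      inner_sub_left _ _ _
    have E2 : ‖lk - lamstar‖^2 = ‖lp - lamstar‖^2
        + 2 * (kk * β) * inner ℝ (lp - lamstar) rp + (kk * β)^2 * ‖rp‖^2 := by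
      have ha : lk - lamstar = (lp - lamstar) + (kk * β) • rp := by
        rw [E1]; abel
      rw [ha, norm_add_sq_real, real_inner_smul_right, norm_smul, Real.norm_eq_abs,
        abs_of_nonneg hkb.le]
      ring
    have E3 : 2 * (inner ℝ (P d) ep : ℝ) = qform P d + qform P ep - qform P e := by
      have := qform_polar P hPsym d ep
      have hde : d - ep = -e := by rw [hd, hep, he]; abel
      rw [hde] at this
      have hqe : qform P (-e) = qform P e := by simp [qform, inner_neg_neg]
      rw [hqe] at this
      exact this
    have E4 : 2 * (inner ℝ d ep : ℝ) = ‖d‖^2 + ‖ep‖^2 - ‖e‖^2 := by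
      have hde : e = ep - d := by rw [hd, hep, he]; abel
      rw [hde, norm_sub_sq_real, real_inner_comm ep d]
      ring
    have E5d : qform P d = qform Q d + β * ‖rp - rk‖^2 := by
      have := hQexp d
      rw [hAd] at this
      simp only [qform] at this ⊢
      linarith
    have E5e : qform P e = qform Q e + β * ‖rk‖^2 := by
      have := hQexp e
      rw [hAe] at this
      simp only [qform] at this ⊢
      linarith
    have E5ep : qform P ep = qform Q ep + β * ‖rp‖^2 := by
      have := hQexp ep
      rw [hAep] at this
      simp only [qform] at this ⊢
      linarith
    have E6 : 2 * (inner ℝ rk rp : ℝ) = ‖rk‖^2 + ‖rp‖^2 - ‖rp - rk‖^2 := by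
      rw [norm_sub_sq_real, real_inner_comm rp rk]
      ring
    -- assemble
    have hqQd : 0 ≤ qform Q d := hQnonneg d
    have S4 := mul_le_mul_of_nonneg_left S3 (by positivity : (0:ℝ) ≤ 2 * kk * β)
    have heq : ‖lk - lamstar‖^2 + kk^2 * β * qform Q e + kk * β * Lf * ‖e‖^2
        - (‖lp - lamstar‖^2 + kk^2 * β * qform Q ep + kk^2 * β^2 * ‖rp‖^2
          + kk * β * (Lf + μ) * ‖ep‖^2)
        = 2 * kk * β * ((inner ℝ lk rp - kk * β * inner ℝ rk rp - kk * inner ℝ (P d) ep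
            - Lf * inner ℝ d ep + Lf/2 * ‖d‖^2)
            - ((inner ℝ lamstar rp : ℝ) + μ/2 * ‖ep‖^2))
          + kk^2 * β * qform Q d := by
      linear_combination (-(2*kk*β)) * E1' + (2*kk*β) * E7 + E2 + (kk^2*β^2) * E6
        + (kk^2*β) * E3 + (kk*β*Lf) * E4 + (kk^2*β) * E5d
        + (kk^2*β) * E5ep + (-(kk^2*β)) * E5e
    have hqQd2 : 0 ≤ kk^2 * β * qform Q d := by positivity
    linarith [S4, heq, hqQd2]
  -- THE LYAPUNOV FUNCTION
  set Φ : ℕ → ℝ := fun k => ((k:ℝ) + 1 + k0) / (2*(k:ℝ)*β) * ‖lamseq k - lamstar‖^2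
      + ((k:ℝ) + 1 + k0) * (k:ℝ) / 2 * qform Q (x k - xstar)
      + ((k:ℝ) + 1 + k0) * Lf / 2 * ‖x k - xstar‖^2 with hΦ
  clear_value Φ
  have hstep : ∀ k : ℕ, 1 ≤ k →
      Φ (k+1) + ((k:ℝ)+1+k0) * (k:ℝ) * β / 2 * ‖A (x (k+1)) - b‖^2 ≤ Φ k := by
    intro k hk
    have hKk := KEY k hk
    have hkk1 : (1:ℝ) ≤ (k:ℝ) := by exact_mod_cast hk
    have hqle := hQle (x (k+1) - xstar)
    have hqB0 : 0 ≤ qform Q (x (k+1) - xstar) := hQnonneg _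
    have hl0 : (0:ℝ) ≤ ‖lamseq (k+1) - lamstar‖^2 := by positivity
    have hnB0 : (0:ℝ) ≤ ‖x (k+1) - xstar‖^2 := by positivity
    have hRB0 : (0:ℝ) ≤ ‖A (x (k+1)) - b‖^2 := by positivity
    simp only [hΦ]
    push_cast
    set lA := ‖lamseq k - lamstar‖^2 with hlA
    set lB := ‖lamseq (k+1) - lamstar‖^2 with hlB
    set qA := qform Q (x k - xstar) with hqA
    set qB := qform Q (x (k+1) - xstar) with hqB
    set nA := ‖x k - xstar‖^2 with hnA
    set nB := ‖x (k+1) - xstar‖^2 with hnB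
    set RB := ‖A (x (k+1)) - b‖^2 with hRB
    set kk := (k:ℝ) with hkk
    clear_value lA lB qA qB nA nB RB kk
    -- three comparisons
    have h1 : (kk+1+1+k0)/(2*(kk+1)*β) * lB ≤ (kk+1+k0)/(2*kk*β) * lB := by
      apply mul_le_mul_of_nonneg_right _ hl0
      rw [div_le_div_iff₀ (by positivity) (by nlinarith)]
      nlinarith [hk00, hβ]
    have hz : (k0*μ - 2*Lf) * nB = 0 := by rw [hk0mu]; ring
    have h2 : (kk+1+1+k0)*(kk+1)/2 * qB + (kk+1+1+k0)*Lf/2 * nB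
        ≤ (kk+1+k0)*kk/2 * qB + (kk+1+k0)*(Lf+μ)/2 * nB := by
      nlinarith [mul_nonneg (show (0:ℝ) ≤ 2*kk+2+k0 by linarith)
        (show (0:ℝ) ≤ μ/2*nB - qB by linarith), hz]
    have hc0 : (0:ℝ) ≤ (kk+1+k0)/(2*kk*β) := by positivity
    have h3 := mul_le_mul_of_nonneg_left hKk hc0
    have hkne : kk ≠ 0 := by linarith
    have hbne : β ≠ 0 := ne_of_gt hβ
    have hexpL : (kk+1+k0)/(2*kk*β) * (lB + kk^2*β*qB + kk^2*β^2*RB + kk*β*(Lf+μ)*nB)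
        = (kk+1+k0)/(2*kk*β)*lB + (kk+1+k0)*kk/2*qB + (kk+1+k0)*kk*β/2*RB
          + (kk+1+k0)*(Lf+μ)/2*nB := by
      field_simp
    have hexpR : (kk+1+k0)/(2*kk*β) * (lA + kk^2*β*qA + kk*β*Lf*nA)
        = (kk+1+k0)/(2*kk*β)*lA + (kk+1+k0)*kk/2*qA + (kk+1+k0)*Lf/2*nA := by
      field_simp
    rw [hexpL, hexpR] at h3
    linarith [h1, h2, h3]
  -- monotonicity
  have hmono : ∀ k : ℕ, 1 ≤ k → Φ k ≤ Φ 1 := by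
    intro k hk
    induction k, hk using Nat.le_induction with
    | base => exact le_refl _
    | succ n hn ih =>
      have hs := hstep n hn
      have hn0 : (0:ℝ) ≤ (n:ℝ) := Nat.cast_nonneg n
      have hR : (0:ℝ) ≤ ‖A (x (n+1)) - b‖^2 := by positivity
      have hterm : (0:ℝ) ≤ ((n:ℝ)+1+k0) * (n:ℝ) * β / 2 * ‖A (x (n+1)) - b‖^2 := by
        have := mul_nonneg (mul_nonneg (mul_nonneg
          (by linarith [hk00] : (0:ℝ) ≤ (n:ℝ)+1+k0) hn0) hβ.le) hR
        linarith
      linarith [hs, ih, hterm]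
  -- nonnegativity of Φ
  have hΦnonneg : ∀ k : ℕ, 0 ≤ Φ k := by
    intro k
    simp only [hΦ]
    have hk0' : (0:ℝ) ≤ (k:ℝ) := Nat.cast_nonneg k
    have hc : (0:ℝ) ≤ (k:ℝ)+1+k0 := by linarith [hk00]
    have h1 : (0:ℝ) ≤ ((k:ℝ) + 1 + k0) / (2*(k:ℝ)*β) * ‖lamseq k - lamstar‖^2 :=
      mul_nonneg (div_nonneg hc (by positivity)) (by positivity)
    have h2 : (0:ℝ) ≤ ((k:ℝ) + 1 + k0) * (k:ℝ) / 2 * qform Q (x k - xstar) :=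
      mul_nonneg (div_nonneg (mul_nonneg hc hk0') (by norm_num)) (hQnonneg _)
    have h3 : (0:ℝ) ≤ ((k:ℝ) + 1 + k0) * Lf / 2 * ‖x k - xstar‖^2 :=
      mul_nonneg (div_nonneg (mul_nonneg hc hLf) (by norm_num)) (by positivity)
    linarith
  -- value of Φ 1
  have hq2 : ∀ v, qform (P + Lf • 1 - β • M) v = qform Q v + Lf * ‖v‖^2 := by
    intro v
    simp only [qform, hQdef, ContinuousLinearMap.sub_apply, ContinuousLinearMap.add_apply,
      ContinuousLinearMap.smul_apply, ContinuousLinearMap.one_apply, inner_sub_right,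
      inner_add_right, real_inner_smul_right, real_inner_self_eq_norm_sq]
    ring
  have hΦ1 : Φ 1 = (k0 + 2) / (2 * β) * ‖lamstar‖ ^ 2
      + (k0 + 2) / 2 * qform (P + Lf • 1 - β • M) (x 1 - xstar) := by
    simp only [hΦ, hlam1, hq2]
    rw [zero_sub, norm_neg]
    push_cast
    have hbne : β ≠ 0 := ne_of_gt hβ
    field_simp
    ring
  -- final bounds
  have htt1 : (1:ℝ) ≤ (t:ℝ) := by exact_mod_cast ht
  have htpos : (0:ℝ) < (t:ℝ) * ((t:ℝ) + k0 + 1) := by nlinarith [hk00]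
  have hΦt1 := hmono (t+1) (by omega)
  have hΦ1pos : (0:ℝ) ≤ Φ 1 := le_trans (hΦnonneg (t+1)) hΦt1
  rw [← hΦ1]
  have hst := hstep t ht
  have hmt := hmono t ht
  have hkey2 : ((t:ℝ)+1+k0) * (t:ℝ) * β / 2 * ‖A (x (t+1)) - b‖^2 ≤ Φ 1 := by
    linarith [hst, hmt, hΦnonneg (t+1)]
  have hqB0 : 0 ≤ qform Q (x (t+1) - xstar) := hQnonneg _
  apply max_le
  · rw [div_mul_eq_mul_div, le_div_iff₀ htpos]
    have hr : β * ‖A (x (t+1)) - b‖^2 * ((t:ℝ) * ((t:ℝ) + k0 + 1))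
        = 2 * (((t:ℝ)+1+k0) * (t:ℝ) * β / 2 * ‖A (x (t+1)) - b‖^2) := by ring
    linarith [hkey2, hr.le, hr.ge]
  · rw [div_mul_eq_mul_div, le_div_iff₀ htpos]
    have hqb : ((t:ℝ)+2+k0) * ((t:ℝ)+1) / 2 * qform Q (x (t+1) - xstar) ≤ Φ (t+1) := by
      simp only [hΦ]
      push_cast
      have hc : (0:ℝ) ≤ (t:ℝ)+1+1+k0 := by linarith [hk00]
      have h1 : (0:ℝ) ≤ ((t:ℝ)+1+1+k0) / (2*((t:ℝ)+1)*β) * ‖lamseq (t+1) - lamstar‖^2 :=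
        mul_nonneg (div_nonneg hc (by positivity)) (by positivity)
      have h3 : (0:ℝ) ≤ ((t:ℝ)+1+1+k0) * Lf / 2 * ‖x (t+1) - xstar‖^2 :=
        mul_nonneg (div_nonneg (mul_nonneg hc hLf) (by norm_num)) (by positivity)
      have he : ((t:ℝ)+2+k0) * ((t:ℝ)+1) / 2 = ((t:ℝ)+1+1+k0) * ((t:ℝ)+1) / 2 := by ring
      rw [he]
      linarith
    have hcomp : qform Q (x (t+1) - xstar) * ((t:ℝ) * ((t:ℝ) + k0 + 1))
        ≤ 2 * (((t:ℝ)+2+k0) * ((t:ℝ)+1) / 2 * qform Q (x (t+1) - xstar)) := by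
      nlinarith [hqB0, htt1, hk00]
    linarith [hqb, hcomp, hΦt1]
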